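/- The pseudospin expectation obeys the symmetry F(γ, β, θ) = F(−β′, −γ′, θ) for all γ, β ∈ ℝ^p and all θ ∈ ℝ, where γ′ = (γ_p, …, γ_1) and β′ = (β_p, …, β_1) are the reversed tuples; i.e., reversing the sequence, negating all angles, and exchanging the roles of the γ- and β-angles leaves the expectation unchanged. -/

import Mathlib

open Matrix Complex Real

noncomputable section

def σx : Matrix (Fin 2) (Fin 2) ℂ := !![0, 1; 1, 0]

def σz : Matrix (Fin 2) (Fin 2) ℂ := !![1, 0; 0, -1]

/-- The Bloch axis `n(θ) = cos θ · σz + sin θ · σx`. -/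
def nvec (θ : ℝ) : Matrix (Fin 2) (Fin 2) ℂ :=
  (Real.cos θ : ℂ) • σz + (Real.sin θ : ℂ) • σx

/-- `U_B(β) = exp(−2iβ·σz)`. -/
def UB (β : ℝ) : Matrix (Fin 2) (Fin 2) ℂ :=
  NormedSpace.exp ((-2 * β * Complex.I) • σz)

/-- `U_C(γ,θ) = exp(−2iγ·n(θ))`. -/
def UC (γ θ : ℝ) : Matrix (Fin 2) (Fin 2) ℂ :=
  NormedSpace.exp ((-2 * γ * Complex.I) • nvec θ)

/-- The level-`p` QAOA circuit `U(γ,β,θ) = U_B(β_p)·U_C(γ_p,θ)·⋯·U_B(β_1)·U_C(γ_1,θ)`. -/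
def Uqaoa (p : ℕ) (γ β : Fin p → ℝ) (θ : ℝ) : Matrix (Fin 2) (Fin 2) ℂ :=
  ((List.ofFn fun i : Fin p => UB (β i) * UC (γ i) θ).reverse).prod

/-- The pseudospin expectation `F(γ,β,θ) = Re tr[n(θ)·U·σz·U†]`. -/
def Fps (p : ℕ) (γ β : Fin p → ℝ) (θ : ℝ) : ℝ :=
  (Matrix.trace (nvec θ * Uqaoa p γ β θ * σz * (Uqaoa p γ β θ)ᴴ)).re

end
noncomputable section

/-! ### Auxiliary lemmas -/

lemma aux_ofFn_reverse {α : Type*} (n : ℕ) (f : Fin n → α) :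
    (List.ofFn f).reverse = List.ofFn (fun i => f i.rev) := by
  apply List.ext_getElem <;> simp [List.getElem_reverse, Fin.rev]
  intro i h1
  congr 1
  simp [Fin.ext_iff]
  omega

lemma aux_VV (θ : ℝ) : nvec (θ/2) * nvec (θ/2) = 1 := by
  ext i j
  fin_cases i <;> fin_cases j <;>
    simp [nvec, σx, σz, Matrix.mul_apply, Fin.sum_univ_two, Matrix.one_apply,
      -Complex.ofReal_cos, -Complex.ofReal_sin] <;>
    · norm_cast
      nlinarith [Real.sin_sq_add_cos_sq (θ/2)]

lemma aux_VzV (θ : ℝ) : nvec (θ/2) * σz * nvec (θ/2) = nvec θ := by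
  have h2 : θ = 2 * (θ/2) := by ring
  have hc : Real.cos θ = Real.cos (θ/2)^2 - Real.sin (θ/2)^2 := by
    have h := Real.cos_two_mul (θ/2); rw [← h2] at h
    nlinarith [Real.sin_sq_add_cos_sq (θ/2)]
  have hs : Real.sin θ = 2 * Real.sin (θ/2) * Real.cos (θ/2) := by
    rw [← Real.sin_two_mul, ← h2]
  ext i j
  fin_cases i <;> fin_cases j <;>
    simp [nvec, σx, σz, Matrix.mul_apply, Fin.sum_univ_two, hc, hs] <;>
    · norm_cast
      ring

lemma aux_VnV (θ : ℝ) : nvec (θ/2) * nvec θ * nvec (θ/2) = σz := by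
  rw [← aux_VzV θ]
  calc nvec (θ/2) * (nvec (θ/2) * σz * nvec (θ/2)) * nvec (θ/2)
      = (nvec (θ/2) * nvec (θ/2)) * σz * (nvec (θ/2) * nvec (θ/2)) := by
        noncomm_ring
    _ = σz := by rw [aux_VV]; noncomm_ring

lemma aux_Vinv (θ : ℝ) : (nvec (θ/2))⁻¹ = nvec (θ/2) :=
  Matrix.inv_eq_right_inv (aux_VV θ)

lemma aux_VunitV (θ : ℝ) : IsUnit (nvec (θ/2)) :=
  ⟨⟨nvec (θ/2), nvec (θ/2), aux_VV θ, aux_VV θ⟩, rfl⟩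

lemma aux_conj_smul_exp (θ : ℝ) (c : ℂ) (A : Matrix (Fin 2) (Fin 2) ℂ) :
    nvec (θ/2) * NormedSpace.exp (c • A) * nvec (θ/2) =
      NormedSpace.exp (c • (nvec (θ/2) * A * nvec (θ/2))) := by
  have := Matrix.exp_conj (nvec (θ/2)) (c • A) (aux_VunitV θ)
  rw [aux_Vinv] at this
  rw [← this]
  congr 1
  rw [Matrix.mul_smul, Matrix.smul_mul]

lemma aux_conj_UB (θ b : ℝ) : nvec (θ/2) * UB b * nvec (θ/2) = UC b θ := by
  rw [UB, UC, aux_conj_smul_exp, aux_VzV]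

lemma aux_conj_UC (θ g : ℝ) : nvec (θ/2) * UC g θ * nvec (θ/2) = UB g := by
  rw [UB, UC, aux_conj_smul_exp, aux_VnV]

lemma aux_conj_mul (θ : ℝ) (A B : Matrix (Fin 2) (Fin 2) ℂ) :
    nvec (θ/2) * (A * B) * nvec (θ/2) =
      (nvec (θ/2) * A * nvec (θ/2)) * (nvec (θ/2) * B * nvec (θ/2)) := by
  calc nvec (θ/2) * (A * B) * nvec (θ/2)
      = nvec (θ/2) * A * (nvec (θ/2) * nvec (θ/2)) * B * nvec (θ/2) := by
        rw [aux_VV]; noncomm_ring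
    _ = _ := by noncomm_ring

lemma aux_conj_prod (θ : ℝ) (l : List (Matrix (Fin 2) (Fin 2) ℂ)) :
    nvec (θ/2) * l.prod * nvec (θ/2) =
      (l.map fun M => nvec (θ/2) * M * nvec (θ/2)).prod := by
  induction l with
  | nil => simp [aux_VV θ]
  | cons a l ih =>
    simp only [List.map_cons, List.prod_cons, ← ih]
    exact aux_conj_mul θ a l.prod

lemma aux_sz_herm : σzᴴ = σz := by
  ext i j
  fin_cases i <;> fin_cases j <;> simp [σz]

lemma aux_nvec_herm (θ : ℝ) : (nvec θ)ᴴ = nvec θ := by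
  ext i j
  fin_cases i <;> fin_cases j <;>
    simp [nvec, σx, σz, -Complex.ofReal_cos, -Complex.ofReal_sin, Complex.conj_ofReal]

lemma aux_star_coeff (b : ℝ) :
    star (-2 * (b : ℂ) * Complex.I) = -2 * ((-b : ℝ) : ℂ) * Complex.I := by
  rw [Complex.star_def]
  have h : (-2 * (b : ℂ) * Complex.I) = Complex.ofReal (-2 * b) * Complex.I := by
    push_cast; ring
  rw [h, _root_.map_mul, Complex.conj_ofReal, Complex.conj_I]
  push_cast; ring

lemma aux_UB_dag (b : ℝ) : (UB b)ᴴ = UB (-b) := by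
  rw [UB, UB, ← Matrix.exp_conjTranspose, Matrix.conjTranspose_smul, aux_sz_herm,
    aux_star_coeff]

lemma aux_UC_dag (g θ : ℝ) : (UC g θ)ᴴ = UC (-g) θ := by
  rw [UC, UC, ← Matrix.exp_conjTranspose, Matrix.conjTranspose_smul, aux_nvec_herm,
    aux_star_coeff]

/-- Abstract form of the trace identity. -/
lemma aux_trace_key (V n U U' : Matrix (Fin 2) (Fin 2) ℂ) (hVV : V * V = 1)
    (hVherm : Vᴴ = V) (hz : V * σz * V = n) (hn : V * n * V = σz)
    (hW : (V * U * V)ᴴ = U') :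
    Matrix.trace (n * U * σz * Uᴴ) = Matrix.trace (n * U' * σz * U'ᴴ) := by
  have hU'eq : U' = V * Uᴴ * V := by
    rw [← hW, Matrix.conjTranspose_mul, Matrix.conjTranspose_mul, hVherm]
    noncomm_ring
  have hdagU' : U'ᴴ = V * U * V := by
    rw [hU'eq, Matrix.conjTranspose_mul, Matrix.conjTranspose_mul, hVherm,
      Matrix.conjTranspose_conjTranspose]
    noncomm_ring
  have h1 : n * U' * σz * U'ᴴ = V * (σz * Uᴴ * n * U) * V := by
    calc n * U' * σz * U'ᴴ
        = (V * σz * V) * (V * Uᴴ * V) * (V * n * V) * (V * U * V) := by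
          rw [hz, hn, ← hU'eq, ← hdagU']
      _ = V * (σz * (V * V) * Uᴴ * (V * V) * n * (V * V) * U) * V := by noncomm_ring
      _ = V * (σz * Uᴴ * n * U) * V := by rw [hVV]; noncomm_ring
  have h2 : Matrix.trace (V * (σz * Uᴴ * n * U) * V) = Matrix.trace (σz * Uᴴ * n * U) := by
    rw [Matrix.trace_mul_comm, ← Matrix.mul_assoc, hVV, Matrix.one_mul]
  have h3 : Matrix.trace (n * U * σz * Uᴴ) = Matrix.trace (σz * Uᴴ * n * U) := by
    rw [show n * U * σz * Uᴴ = (n * U) * (σz * Uᴴ) from by noncomm_ring,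
      Matrix.trace_mul_comm]
    congr 1
    noncomm_ring
  rw [h1, h2, h3]

/-- Reversing the angle sequence, negating all angles, and exchanging the roles of the
γ- and β-angles leaves the pseudospin expectation unchanged: `F(γ,β,θ) = F(−β′,−γ′,θ)`. -/
theorem pseudospin_reverse_negate_swap_symmetry
    (p : ℕ) (hp : 1 ≤ p) (γ β : Fin p → ℝ) (θ : ℝ) :
    Fps p γ β θ = Fps p (fun i => -β (Fin.rev i)) (fun i => -γ (Fin.rev i)) θ := by
  have step1 : nvec (θ/2) * Uqaoa p γ β θ * nvec (θ/2)
      = ((List.ofFn fun i : Fin p => UC (β i) θ * UB (γ i)).reverse).prod := by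
    have hfun1 : ((fun M => nvec (θ/2) * M * nvec (θ/2)) ∘
        fun i : Fin p => UB (β i) * UC (γ i) θ)
        = fun i : Fin p => UC (β i) θ * UB (γ i) := by
      funext i
      simp only [Function.comp]
      rw [aux_conj_mul, aux_conj_UB, aux_conj_UC]
    rw [Uqaoa, aux_conj_prod, List.map_reverse, List.map_ofFn, hfun1]
  have step2 : (nvec (θ/2) * Uqaoa p γ β θ * nvec (θ/2))ᴴ
      = Uqaoa p (fun i => -β (Fin.rev i)) (fun i => -γ (Fin.rev i)) θ := by
    rw [step1, Matrix.conjTranspose_list_prod, List.map_reverse, List.reverse_reverse,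
      List.map_ofFn, Uqaoa, aux_ofFn_reverse]
    congr 1
    rw [List.ofFn_inj]
    funext i
    simp only [Function.comp, Fin.rev_rev, Matrix.conjTranspose_mul, aux_UB_dag, aux_UC_dag]
  have key := aux_trace_key (nvec (θ/2)) (nvec θ) (Uqaoa p γ β θ)
    (Uqaoa p (fun i => -β (Fin.rev i)) (fun i => -γ (Fin.rev i)) θ)
    (aux_VV θ) (aux_nvec_herm (θ/2)) (aux_VzV θ) (aux_VnV θ) step2
  unfold Fps
  rw [key]
end
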